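/- Uniform upper bound for large moneyness: for k ≥ 0 and (1-e^k)^+ ≤ c < 1, Y_BS(k,c) ≤ Φ^{-1}(c + e^k·Φ(-√(2k))) + √(2k), with the convention Φ^{-1}(u) = +∞ for u ≥ 1. -/

import Mathlib

open MeasureTheory Real Filter Asymptotics Set
open Topology

/-- Standard normal density. -/
noncomputable def phi (z : ℝ) : ℝ := (Real.sqrt (2 * Real.pi))⁻¹ * Real.exp (-z ^ 2 / 2)

/-- Standard normal CDF. -/
noncomputable def Phi (x : ℝ) : ℝ := ∫ z in Set.Iic x, phi z

/-- Black–Scholes normalized call price. -/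
noncomputable def CBS (k y : ℝ) : ℝ :=
  if 0 < y then Phi (-k / y + y / 2) - Real.exp k * Phi (-k / y - y / 2)
  else max (1 - Real.exp k) 0

/-- Implied total standard deviation: inverse of `CBS k` on `[0,∞)`. -/
noncomputable def YBS (k c : ℝ) : ℝ := sInf {y : ℝ | 0 ≤ y ∧ CBS k y = c}

/-- Inverse of the standard normal CDF on (0,1). -/
noncomputable def PhiInv (u : ℝ) : ℝ := sInf {x : ℝ | u ≤ Phi x}

/-- Extended-real quantile with the convention `Φ⁻¹(u) = +∞` for `u ≥ 1`, `-∞` for `u ≤ 0`. -/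
noncomputable def PhiInvE (u : ℝ) : EReal :=
  if 1 ≤ u then ⊤ else if u ≤ 0 then ⊥ else ((PhiInv u : ℝ) : EReal)

lemma phi_eq_gauss : phi = ProbabilityTheory.gaussianPDFReal 0 1 := by
  ext x
  simp [phi, ProbabilityTheory.gaussianPDFReal]


lemma phi_pos (z : ℝ) : 0 < phi z := by
  rw [phi_eq_gauss]; exact ProbabilityTheory.gaussianPDFReal_pos 0 1 z one_ne_zero

lemma phi_integrable : MeasureTheory.Integrable phi := by
  rw [phi_eq_gauss]; exact ProbabilityTheory.integrable_gaussianPDFReal 0 1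

lemma integral_phi : ∫ z, phi z = 1 := by
  rw [phi_eq_gauss]; exact ProbabilityTheory.integral_gaussianPDFReal_eq_one 0 one_ne_zero

lemma phi_le (z : ℝ) : phi z ≤ (Real.sqrt (2 * Real.pi))⁻¹ := by
  have h1 : Real.exp (-z ^ 2 / 2) ≤ 1 := by
    rw [Real.exp_le_one_iff]; nlinarith [sq_nonneg z]
  have h2 : (0:ℝ) ≤ (Real.sqrt (2 * Real.pi))⁻¹ := by positivity
  calc phi z ≤ (Real.sqrt (2 * Real.pi))⁻¹ * 1 := mul_le_mul_of_nonneg_left h1 h2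
  _ = _ := mul_one _

lemma phi_continuous : Continuous phi := by
  unfold phi; fun_prop

lemma Phi_sub (a b : ℝ) : Phi b - Phi a = ∫ z in a..b, phi z :=
  intervalIntegral.integral_Iic_sub_Iic phi_integrable.integrableOn phi_integrable.integrableOn

lemma Phi_strictMono : StrictMono Phi := by
  intro a b hab
  have h : 0 < ∫ z in a..b, phi z :=
    intervalIntegral.intervalIntegral_pos_of_pos phi_integrable.intervalIntegrable phi_pos hab
  have := Phi_sub a b
  linarith

lemma Phi_mono : Monotone Phi := Phi_strictMono.monotone

lemma Phi_nonneg (x : ℝ) : 0 ≤ Phi x :=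
  MeasureTheory.setIntegral_nonneg measurableSet_Iic (fun z _ => (phi_pos z).le)

lemma Phi_le_one (x : ℝ) : Phi x ≤ 1 := by
  rw [← integral_phi]
  exact MeasureTheory.setIntegral_le_integral phi_integrable
    (Filter.Eventually.of_forall fun z => (phi_pos z).le)

lemma Phi_lipschitz : LipschitzWith (Real.sqrt (2 * Real.pi))⁻¹.toNNReal Phi := by
  apply LipschitzWith.of_dist_le_mul
  intro a b
  rw [Real.dist_eq, Real.dist_eq, Phi_sub b a]
  have hC : (0:ℝ) ≤ (Real.sqrt (2 * Real.pi))⁻¹ := by positivity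
  calc |∫ z in b..a, phi z| ≤ (Real.sqrt (2 * Real.pi))⁻¹ * |a - b| := by
        have := intervalIntegral.norm_integral_le_of_norm_le_const
          (a := b) (b := a) (C := (Real.sqrt (2 * Real.pi))⁻¹) (f := phi) ?_
        · simpa [Real.norm_eq_abs, abs_sub_comm a b] using this
        · intro x _
          rw [Real.norm_eq_abs, abs_of_pos (phi_pos x)]
          exact phi_le x
      _ = _ := by rw [Real.coe_toNNReal _ hC]

lemma Phi_continuous : Continuous Phi := Phi_lipschitz.continuous

lemma Phi_nat_tendsto : Tendsto (fun n : ℕ => Phi n) atTop (𝓝 1) := by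
  have h := MeasureTheory.tendsto_setIntegral_of_monotone (s := fun n : ℕ => Iic (n:ℝ))
    (f := phi) (μ := volume) (fun n => measurableSet_Iic)
    (fun m n hmn => Iic_subset_Iic.2 (by exact_mod_cast hmn)) ?_
  · have hU : (⋃ n : ℕ, Iic ((n:ℝ))) = univ := by
      apply eq_univ_of_forall
      intro x
      obtain ⟨n, hn⟩ := exists_nat_ge x
      exact mem_iUnion.2 ⟨n, hn⟩
    rw [hU] at h
    simpa [Phi, Measure.restrict_univ, integral_phi] using h
  · exact phi_integrable.integrableOn

lemma Phi_neg_nat_tendsto : Tendsto (fun n : ℕ => Phi (-n)) atTop (𝓝 0) := by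
  have h := MeasureTheory.tendsto_setIntegral_of_antitone (s := fun n : ℕ => Iic (-(n:ℝ)))
    (f := phi) (μ := volume) (fun n => measurableSet_Iic)
    (fun m n hmn => Iic_subset_Iic.2 (neg_le_neg (by exact_mod_cast hmn)))
    ⟨0, phi_integrable.integrableOn⟩
  have hI : (⋂ n : ℕ, Iic (-(n:ℝ))) = ∅ := by
    apply eq_empty_of_forall_notMem
    intro x hx
    obtain ⟨n, hn⟩ := exists_nat_gt (-x)
    have := mem_iInter.1 hx n
    simp only [mem_Iic] at this
    linarith
  rw [hI] at h
  simpa [Phi] using h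

lemma Phi_tendsto_atTop : Tendsto Phi atTop (𝓝 1) := by
  have hfloor : Tendsto (fun x : ℝ => Phi (⌊x⌋₊ : ℕ)) atTop (𝓝 1) :=
    Phi_nat_tendsto.comp tendsto_nat_floor_atTop
  refine tendsto_of_tendsto_of_tendsto_of_le_of_le' hfloor tendsto_const_nhds ?_
    (Eventually.of_forall Phi_le_one)
  filter_upwards [eventually_ge_atTop (0:ℝ)] with x hx
  exact Phi_mono (Nat.floor_le hx)

lemma Phi_tendsto_atBot : Tendsto Phi atBot (𝓝 0) := by
  have hcomp : Tendsto (fun x : ℝ => Phi (-(⌊-x⌋₊ : ℕ))) atBot (𝓝 0) :=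
    Phi_neg_nat_tendsto.comp (tendsto_nat_floor_atTop.comp tendsto_neg_atBot_atTop)
  refine tendsto_of_tendsto_of_tendsto_of_le_of_le' tendsto_const_nhds hcomp
    (Eventually.of_forall Phi_nonneg) ?_
  filter_upwards [eventually_le_atBot (0:ℝ)] with x hx
  apply Phi_mono
  have : (⌊-x⌋₊ : ℝ) ≤ -x := Nat.floor_le (by linarith)
  linarith

lemma Phi_PhiInv {u : ℝ} (h0 : 0 < u) (h1 : u < 1) : Phi (PhiInv u) = u := by
  obtain ⟨a, ha⟩ : ∃ a, Phi a < u := by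
    have := Phi_tendsto_atBot.eventually_lt_const h0
    exact this.exists
  obtain ⟨b, hb⟩ : ∃ b, u < Phi b := by
    have := Phi_tendsto_atTop.eventually_const_lt h1
    exact this.exists
  have hab : a ≤ b := by
    by_contra hba
    exact absurd (Phi_mono (le_of_not_ge hba)) (by linarith)
  obtain ⟨x₀, _, hx₀⟩ := intermediate_value_Icc hab Phi_continuous.continuousOn
    (⟨ha.le, hb.le⟩ : u ∈ Icc (Phi a) (Phi b))
  have hset : {x : ℝ | u ≤ Phi x} = Ici x₀ := by
    ext x
    simp only [mem_setOf_eq, mem_Ici, ← hx₀]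
    exact ⟨fun h => Phi_strictMono.le_iff_le.1 h, fun h => Phi_mono h⟩
  rw [PhiInv, hset, csInf_Ici, hx₀]

lemma phi_shift_le {k y t : ℝ} (hy : 0 < y) (ht : -k/y - y/2 ≤ t) :
    phi (t + y) ≤ Real.exp k * phi t := by
  have hC : (0:ℝ) < (Real.sqrt (2 * Real.pi))⁻¹ := by positivity
  unfold phi
  rw [mul_comm (Real.exp k), mul_assoc, ← Real.exp_add]
  apply mul_le_mul_of_nonneg_left _ hC.le
  apply Real.exp_le_exp.2
  have h1 : (-k/y - y/2) * y ≤ t * y := mul_le_mul_of_nonneg_right ht hy.le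
  have h2 : (-k/y - y/2) * y = -k - y^2/2 := by field_simp
  nlinarith

lemma intervalIntegrable_phi (a b : ℝ) : IntervalIntegrable phi volume a b :=
  phi_integrable.intervalIntegrable

lemma intervalIntegrable_phi_shift (y a b : ℝ) :
    IntervalIntegrable (fun t => phi (t + y)) volume a b := by
  simpa using (intervalIntegrable_phi (a + y) (b + y)).comp_add_right y

lemma amgm {k y : ℝ} (hk : 0 ≤ k) (hy : 0 < y) : Real.sqrt (2*k) ≤ k/y + y/2 := by
  have hky : (k/y)*y = k := div_mul_cancel₀ k hy.ne'
  have h2 : 2*k ≤ (k/y + y/2)^2 := by nlinarith [sq_nonneg (k/y - y/2)]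
  calc Real.sqrt (2*k) ≤ Real.sqrt ((k/y+y/2)^2) := Real.sqrt_le_sqrt h2
  _ = k/y+y/2 := Real.sqrt_sq (by positivity)

lemma CBS_key {k y : ℝ} (hk : 0 ≤ k) (hy : 0 < y) :
    Phi (y - Real.sqrt (2*k)) - Real.exp k * Phi (-Real.sqrt (2*k)) ≤ CBS k y := by
  set s := Real.sqrt (2*k) with hs
  have hd2 : -k/y - y/2 ≤ -s := by
    have h1 := amgm hk hy
    have h2 : -k/y = -(k/y) := neg_div y k
    linarith
  rw [CBS, if_pos hy]
  have lhs_eq : Phi (y - s) - Phi (-k/y + y/2) = ∫ t in (-k/y - y/2)..(-s), phi (t + y) := by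
    rw [intervalIntegral.integral_comp_add_right (fun t => phi t) y, ← Phi_sub]
    congr 2 <;> ring
  have rhs_eq : Real.exp k * (Phi (-s) - Phi (-k/y - y/2))
      = ∫ t in (-k/y - y/2)..(-s), Real.exp k * phi t := by
    rw [Phi_sub, intervalIntegral.integral_const_mul]
  have hmono : (∫ t in (-k/y - y/2)..(-s), phi (t + y))
      ≤ ∫ t in (-k/y - y/2)..(-s), Real.exp k * phi t := by
    apply intervalIntegral.integral_mono_on hd2 (intervalIntegrable_phi_shift y _ _)
      ((intervalIntegrable_phi _ _).const_mul _)
    intro t ht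
    exact phi_shift_le hy ht.1
  linarith [lhs_eq, rhs_eq, hmono]

lemma phi_shift_ge {k y t : ℝ} (hy : 0 < y) (ht : t ≤ -k/y + y/2) :
    Real.exp k * phi (t - y) ≤ phi t := by
  have hC : (0:ℝ) < (Real.sqrt (2 * Real.pi))⁻¹ := by positivity
  unfold phi
  rw [mul_comm (Real.exp k), mul_assoc, ← Real.exp_add]
  apply mul_le_mul_of_nonneg_left _ hC.le
  apply Real.exp_le_exp.2
  have h1 : t * y ≤ (-k/y + y/2) * y := mul_le_mul_of_nonneg_right ht hy.le
  have h2 : (-k/y + y/2) * y = -k + y^2/2 := by field_simp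
  nlinarith

lemma intervalIntegrable_phi_shift' (y a b : ℝ) :
    IntervalIntegrable (fun t => phi (t - y)) volume a b := by
  simpa using (intervalIntegrable_phi (a - y) (b - y)).comp_sub_right y

lemma CBS_mono {k a b : ℝ} (hk : 0 ≤ k) (ha : 0 < a) (hab : a ≤ b) : CBS k a ≤ CBS k b := by
  have hb : 0 < b := lt_of_lt_of_le ha hab
  rw [CBS, CBS, if_pos ha, if_pos hb]
  have hdiv : k/b ≤ k/a := by
    rcases eq_or_lt_of_le hk with h0 | h0
    · simp [← h0]
    · exact div_le_div_of_nonneg_left h0.le ha hab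
  have hna : -k/a = -(k/a) := neg_div a k
  have hnb : -k/b = -(k/b) := neg_div b k
  have h_d1 : -k/a + a/2 ≤ -k/b + b/2 := by linarith
  rcases le_or_gt (-k/b - b/2) (-k/a - a/2) with hcase | hcase
  · have h1 := Phi_mono h_d1
    have h2 := mul_le_mul_of_nonneg_left (Phi_mono hcase) (Real.exp_pos k).le
    linarith
  · set A := -k/a - a/2 + b with hA
    set B := -k/b + b/2 with hB
    have hBB : B = (-k/b - b/2) + b := by rw [hB]; ring
    have hAB : A ≤ B := by rw [hA, hBB]; linarith
    have h_d1a_A : -k/a + a/2 ≤ A := by rw [hA]; linarith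
    have step1 : Real.exp k * (Phi (-k/b - b/2) - Phi (-k/a - a/2))
        = ∫ t in A..B, Real.exp k * phi (t - b) := by
      rw [intervalIntegral.integral_comp_sub_right (fun t => Real.exp k * phi t) b,
        Phi_sub, intervalIntegral.integral_const_mul]
      congr 2
      · rw [hA]; ring
      · rw [hBB]; ring
    have step2 : (∫ t in A..B, Real.exp k * phi (t - b)) ≤ ∫ t in A..B, phi t := by
      apply intervalIntegral.integral_mono_on hAB
        ((intervalIntegrable_phi_shift' b _ _).const_mul _) (intervalIntegrable_phi _ _)
      intro t ht
      exact phi_shift_ge hb (le_trans ht.2 (le_of_eq hB.symm))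
    have step3 : (∫ t in A..B, phi t) ≤ Phi (-k/b + b/2) - Phi (-k/a + a/2) := by
      have h1 := Phi_sub A B
      have h2 := Phi_mono h_d1a_A
      rw [← hB]
      linarith
    linarith [step1, step2, step3]

lemma Phi_pos (x : ℝ) : 0 < Phi x :=
  lt_of_le_of_lt (Phi_nonneg (x-1)) (Phi_strictMono (sub_one_lt x))

lemma CBS_zero {k : ℝ} (hk : 0 ≤ k) : CBS k 0 = 0 := by
  rw [CBS, if_neg (lt_irrefl 0)]
  exact max_eq_right (by linarith [Real.one_le_exp hk])

theorem stmt_18 (k c : ℝ) (hk : 0 ≤ k) (hc : max (1 - Real.exp k) 0 ≤ c) (hc1 : c < 1) :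
    ((YBS k c : ℝ) : EReal) ≤
      PhiInvE (c + Real.exp k * Phi (-Real.sqrt (2 * k))) +
        ((Real.sqrt (2 * k) : ℝ) : EReal) := by
  set s := Real.sqrt (2 * k) with hs
  set u := c + Real.exp k * Phi (-s) with hu
  have hs0 : 0 ≤ s := Real.sqrt_nonneg _
  have hc0 : 0 ≤ c := le_trans (le_max_right _ _) hc
  have hek : 1 ≤ Real.exp k := Real.one_le_exp hk
  have hPhis : 0 < Phi (-s) := Phi_pos _
  have hu0 : 0 < u := by nlinarith
  by_cases h1 : 1 ≤ u
  · rw [PhiInvE, if_pos h1, EReal.top_add_coe]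
    exact le_top
  · push_neg at h1
    rw [PhiInvE, if_neg (not_le.2 h1), if_neg (not_le.2 hu0)]
    have hPP : Phi (PhiInv u) = u := Phi_PhiInv hu0 h1
    set x₀ := PhiInv u with hx₀def
    have hx₀ : -s ≤ x₀ := by
      apply Phi_strictMono.le_iff_le.1
      rw [hPP, hu]
      nlinarith
    set y := x₀ + s with hy
    have hy0 : 0 ≤ y := by rw [hy]; linarith
    have hge : c ≤ CBS k y := by
      rcases eq_or_lt_of_le hy0 with h0 | hypos
      · rw [← h0, CBS_zero hk]
        have hx0s : x₀ = -s := by rw [hy] at h0; linarith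
        have : Phi (-s) = u := by rw [← hx0s, hPP]
        rw [hu] at this
        nlinarith
      · have hkey := CBS_key hk hypos
        have hys : y - s = x₀ := by rw [hy]; ring
        rw [hys, hPP, hu] at hkey
        linarith
    have key : YBS k c ≤ y := by
      rw [YBS]
      set S := {y' : ℝ | 0 ≤ y' ∧ CBS k y' = c} with hS
      have hbdd : BddBelow S := ⟨0, fun z hz => hz.1⟩
      by_cases hmem : CBS k y = c
      · exact csInf_le hbdd ⟨hy0, hmem⟩
      · have hlt : c < CBS k y := lt_of_le_of_ne hge (Ne.symm hmem)
        rcases Set.eq_empty_or_nonempty S with hemp | ⟨y₀, hy₀⟩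
        · rw [hemp, Real.sInf_empty]
          exact hy0
        · have hy₀y : y₀ ≤ y := by
            by_contra hgt
            push_neg at hgt
            rcases eq_or_lt_of_le hy0 with h0 | hypos
            · rw [← h0, CBS_zero hk] at hlt
              linarith
            · have hm := CBS_mono hk hypos hgt.le
              rw [hy₀.2] at hm
              linarith
          exact le_trans (csInf_le hbdd hy₀) hy₀y
    calc ((YBS k c : ℝ) : EReal) ≤ ((y : ℝ) : EReal) := EReal.coe_le_coe_iff.2 key
    _ = ((x₀ : ℝ) : EReal) + ((s : ℝ) : EReal) := by rw [← EReal.coe_add]
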